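/- Let ε be a standard logistic random variable. Then E[ε | ε ≤ s] = −H(F(s))/F(s), where F(s) = 1/(1+e^{−s}) and H is the binary entropy function; in particular E[ε | ε ≤ 0] = −2 log 2. -/

import Mathlib

/-- Binary entropy function. -/
noncomputable def binEnt (z : ℝ) : ℝ := -z * Real.log z - (1 - z) * Real.log (1 - z)

open Real Set MeasureTheory Filter


lemma integrableOn_exp_half (s : ℝ) :
    IntegrableOn (fun x => Real.exp (x / 2)) (Set.Iic s) := by
  refine integrableOn_Iic_of_intervalIntegral_norm_bounded (2 * Real.exp (s / 2)) s
    (fun y => ((Real.continuous_exp.comp (continuous_id.div_const 2)).intervalIntegrable _ _).1)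
    tendsto_id ?_
  filter_upwards [Iic_mem_atBot s] with y hy
  have : (∫ x in y..s, ‖Real.exp (x / 2)‖) = ∫ x in y..s, Real.exp (x / 2) := by
    congr 1; ext x; exact norm_of_nonneg (Real.exp_pos _).le
  simp only [id_eq]
  rw [this, intervalIntegral.integral_comp_div (fun x => Real.exp x) two_ne_zero,
    integral_exp]
  have := Real.exp_pos (y / 2)
  rw [smul_eq_mul]
  nlinarith

lemma hasDerivAt_g (x : ℝ) :
    HasDerivAt (fun x => x * (Real.exp x / (1 + Real.exp x)) - Real.log (1 + Real.exp x))
      (x * (Real.exp x / (1 + Real.exp x) ^ 2)) x := by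
  have hd : (0 : ℝ) < 1 + Real.exp x := by positivity
  have hF : HasDerivAt (fun x => Real.exp x / (1 + Real.exp x))
      (Real.exp x / (1 + Real.exp x) ^ 2) x := by
    have := (Real.hasDerivAt_exp x).div
      ((hasDerivAt_const x (1:ℝ)).add (Real.hasDerivAt_exp x)) hd.ne'
    refine this.congr_deriv ?_
    simp only [Pi.add_apply]
    ring
  have hxF := (hasDerivAt_id x).mul hF
  have hlog : HasDerivAt (fun x => Real.log (1 + Real.exp x)) (Real.exp x / (1 + Real.exp x)) x :=
    by simpa using ((hasDerivAt_const x (1:ℝ)).add (Real.hasDerivAt_exp x)).log hd.ne'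
  have := hxF.sub hlog
  refine this.congr_deriv ?_
  simp only [id]
  ring

lemma integrableOn_f (s : ℝ) :
    IntegrableOn (fun x => x * (Real.exp x / (1 + Real.exp x) ^ 2)) (Set.Iic s) := by
  set M : ℝ := 2 + |s| * Real.exp (s / 2) with hM
  have hcont : Continuous fun x => x * (Real.exp x / (1 + Real.exp x) ^ 2) := by
    apply continuous_id.mul (Real.continuous_exp.div (by continuity) ?_)
    intro x; positivity
  refine Integrable.mono' (((integrableOn_exp_half s).const_mul M))
    hcont.aestronglyMeasurable ?_
  rw [ae_restrict_iff' measurableSet_Iic]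
  filter_upwards with x hx
  simp only [Set.mem_Iic] at hx
  have hd : (0 : ℝ) < 1 + Real.exp x := by positivity
  have h1 : |x * (Real.exp x / (1 + Real.exp x) ^ 2)| ≤ |x| * Real.exp x := by
    rw [abs_mul]
    apply mul_le_mul_of_nonneg_left _ (abs_nonneg x)
    rw [abs_of_nonneg (by positivity)]
    rw [div_le_iff₀ (by positivity)]
    nlinarith [Real.exp_pos x, sq_nonneg (Real.exp x)]
  have h2 : |x| * Real.exp (x / 2) ≤ M := by
    rcases le_or_gt x 0 with h | h
    · have ht : -x / 2 + 1 ≤ Real.exp (-x / 2) := Real.add_one_le_exp _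
      have : |x| * Real.exp (x / 2) ≤ 2 := by
        rw [abs_of_nonpos h]
        rw [show Real.exp (x / 2) = (Real.exp (-x / 2))⁻¹ by
          rw [← Real.exp_neg]; ring_nf]
        rw [mul_inv_le_iff₀ (Real.exp_pos _)]
        nlinarith [Real.exp_pos (-x / 2)]
      have hM0 : (0:ℝ) ≤ |s| * Real.exp (s / 2) := by positivity
      linarith
    · rw [abs_of_pos h]
      have hxs : x ≤ s := hx
      have : x * Real.exp (x / 2) ≤ s * Real.exp (s / 2) :=
        mul_le_mul hxs (Real.exp_le_exp.2 (by linarith)) (Real.exp_pos _).le (by linarith)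
      have hs : s * Real.exp (s / 2) ≤ |s| * Real.exp (s / 2) :=
        mul_le_mul_of_nonneg_right (le_abs_self s) (Real.exp_pos _).le
      linarith
  have h3 : Real.exp x = Real.exp (x / 2) * Real.exp (x / 2) := by
    rw [← Real.exp_add]; ring_nf
  calc ‖x * (Real.exp x / (1 + Real.exp x) ^ 2)‖ ≤ |x| * Real.exp x := h1
    _ = (|x| * Real.exp (x / 2)) * Real.exp (x / 2) := by rw [h3]; ring
    _ ≤ M * Real.exp (x / 2) :=
        mul_le_mul_of_nonneg_right h2 (Real.exp_pos _).le

lemma key (s : ℝ) : (∫ x in Set.Iic s, x * (Real.exp x / (1 + Real.exp x) ^ 2))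
    = s * (Real.exp s / (1 + Real.exp s)) - Real.log (1 + Real.exp s) := by
  have htend : Tendsto (fun x => x * (Real.exp x / (1 + Real.exp x)) - Real.log (1 + Real.exp x))
      atBot (nhds 0) := by
    have h1 : Tendsto (fun x : ℝ => x * Real.exp x) atBot (nhds 0) := by
      have := (tendsto_pow_mul_exp_neg_atTop_nhds_zero 1).comp tendsto_neg_atBot_atTop
      have h1' : Tendsto (fun x : ℝ => -x * Real.exp x) atBot (nhds 0) := by
        simpa [Function.comp_def] using this
      have := h1'.neg
      simpa using this
    have h2 : Tendsto (fun x : ℝ => 1 + Real.exp x) atBot (nhds 1) := by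
      simpa using tendsto_const_nhds.add Real.tendsto_exp_atBot
    have h3 : Tendsto (fun x : ℝ => x * (Real.exp x / (1 + Real.exp x))) atBot (nhds 0) := by
      have h := h1.div h2 one_ne_zero
      rw [zero_div] at h
      exact h.congr fun x => by simp [mul_div_assoc]
    have h4 : Tendsto (fun x : ℝ => Real.log (1 + Real.exp x)) atBot (nhds 0) := by
      have := (Real.continuousAt_log one_ne_zero).tendsto.comp h2
      simpa [Function.comp_def] using this
    simpa using h3.sub h4
  have := integral_Iic_of_hasDerivAt_of_tendsto' (fun x _ => hasDerivAt_g x)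
    (integrableOn_f s) htend
  simpa using this

/-- Conditional expectation of a standard logistic random variable truncated from
above: `E[ε | ε ≤ s] = -H(F(s))/F(s)` with `F(s) = 1/(1+e^{-s})`; in particular
`E[ε | ε ≤ 0] = -2 log 2`. -/
theorem stmt_16 :
    (∀ s : ℝ,
      (∫ x in Set.Iic s, x * (Real.exp x / (1 + Real.exp x)^2)) /
          (1 / (1 + Real.exp (-s))) =
        -binEnt (1 / (1 + Real.exp (-s))) / (1 / (1 + Real.exp (-s)))) ∧
    (∫ x in Set.Iic (0:ℝ), x * (Real.exp x / (1 + Real.exp x)^2)) /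
          (1 / (1 + Real.exp (-(0:ℝ)))) = -(2 * Real.log 2) := by
  have main : ∀ s : ℝ, (∫ x in Set.Iic s, x * (Real.exp x / (1 + Real.exp x)^2)) =
      -binEnt (1 / (1 + Real.exp (-s))) := by
    intro s
    have hd : (0:ℝ) < 1 + Real.exp s := by positivity
    have hp : 1 / (1 + Real.exp (-s)) = Real.exp s / (1 + Real.exp s) := by
      rw [Real.exp_neg]
      rw [div_eq_div_iff (by positivity) hd.ne']
      field_simp
      ring
    rw [key s, hp, binEnt]
    have h1 : (1 : ℝ) - Real.exp s / (1 + Real.exp s) = 1 / (1 + Real.exp s) := by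
      field_simp
      ring
    rw [h1, Real.log_div (Real.exp_ne_zero s) hd.ne', Real.log_exp,
      Real.log_div one_ne_zero hd.ne', Real.log_one]
    field_simp
    ring
  constructor
  · intro s
    rw [main s]
  · rw [main 0]
    have h2 : (1:ℝ) / (1 + Real.exp (-(0:ℝ))) = 1/2 := by
      norm_num
    rw [h2, binEnt]
    have : Real.log (1/2 : ℝ) = -Real.log 2 := by
      rw [one_div, Real.log_inv]
    norm_num [this]
    ring
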